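/- For a factorial standard subspace H, the cutting projection satisfies P_H* = −i P_H i, i.e., the adjoint of P_H (as a real-linear operator with respect to the real part of the inner product) equals the cutting projection P_{iH} onto iH. -/

import Mathlib

variable {H : Type*} [NormedAddCommGroup H] [InnerProductSpace ℂ H]

/-- The symplectic complement of a real-linear subspace of a complex Hilbert space. -/
def symplCompl (K : Submodule ℝ H) : Submodule ℝ H where
  carrier := {ψ : H | ∀ φ ∈ K, (inner ℂ ψ φ : ℂ).im = 0}
  add_mem' := by
    intro a b ha hb φ hφ
    rw [inner_add_left, Complex.add_im, ha φ hφ, hb φ hφ, add_zero]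
  zero_mem' := by
    intro φ hφ
    simp
  smul_mem' := by
    intro c x hx φ hφ
    have : c • x = (c : ℂ) • x := (Complex.coe_smul c x).symm
    rw [this, inner_smul_left]
    simp [hx φ hφ]


/-- Multiplication by `i` as a real-linear map. -/
noncomputable def mulI : H →ₗ[ℝ] H where
  toFun x := Complex.I • x
  map_add' x y := smul_add _ x y
  map_smul' c x := smul_comm Complex.I c x

/-- A standard subspace: closed, cyclic and separating. -/
def IsStandard (K : Submodule ℝ H) : Prop :=
  IsClosed (K : Set H) ∧ (K ⊔ K.map mulI).topologicalClosure = ⊤ ∧ K ⊓ K.map mulI = ⊥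

/-- for a factorial standard subspace `K`, the adjoint of the cutting
projection `P_K` with respect to the real inner product `Re⟨·,·⟩` is `−i P_K i`,
the cutting projection onto `iK`. -/
theorem cutting_projection_adjoint [CompleteSpace H] (K : Submodule ℝ H)
    (hK : IsStandard K) (hfac : K ⊓ symplCompl K = ⊥)
    (P : (K ⊔ symplCompl K : Submodule ℝ H) →ₗ[ℝ] H)
    (hP : ∀ x : (K ⊔ symplCompl K : Submodule ℝ H),
      P x ∈ K ∧ ((x : H) - P x) ∈ symplCompl K) :
    ∀ (x y : H) (hx : x ∈ K ⊔ symplCompl K) (hy : Complex.I • y ∈ K ⊔ symplCompl K),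
      (inner ℂ (P ⟨x, hx⟩) y : ℂ).re
        = (inner ℂ x (-(Complex.I • P ⟨Complex.I • y, hy⟩)) : ℂ).re := by
  intro x y hx hy
  obtain ⟨hp, hxp⟩ := hP ⟨x, hx⟩
  obtain ⟨hq, hyq⟩ := hP ⟨Complex.I • y, hy⟩
  set p := P ⟨x, hx⟩ with hpdef
  set q := P ⟨Complex.I • y, hy⟩ with hqdef
  have h1 : (inner ℂ (x - p) q : ℂ).im = 0 := hxp q hq
  have h2 : (inner ℂ (Complex.I • y - q) p : ℂ).im = 0 := hyq p hp
  have e1 : (inner ℂ x q : ℂ).im = (inner ℂ p q : ℂ).im := by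
    have := h1
    rw [inner_sub_left, Complex.sub_im] at this
    linarith
  have e2 : (inner ℂ (Complex.I • y) p : ℂ).im = (inner ℂ q p : ℂ).im := by
    have := h2
    rw [inner_sub_left, Complex.sub_im] at this
    linarith
  have e3 : (inner ℂ (Complex.I • y) p : ℂ) = -Complex.I * (inner ℂ y p : ℂ) := by
    rw [inner_smul_left]
    simp [Complex.ext_iff]
  have e4 : (inner ℂ q p : ℂ).im = -(inner ℂ p q : ℂ).im := by
    rw [← inner_conj_symm q p, Complex.conj_im]
  have e5 : (inner ℂ p y : ℂ).re = (inner ℂ y p : ℂ).re := by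
    rw [← inner_conj_symm y p, Complex.conj_re]
  have goalrhs : (inner ℂ x (-(Complex.I • q)) : ℂ).re = (inner ℂ x q : ℂ).im := by
    rw [inner_neg_right, inner_smul_right]
    simp
  rw [goalrhs, e1]
  rw [e3] at e2
  simp only [Complex.mul_im, Complex.neg_re, Complex.neg_im, Complex.I_re, Complex.I_im] at e2
  rw [e4] at e2
  rw [e5]
  linarith
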